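/- For every k ≥ 1 there exists n such that the equation a.aⁿ = a^{n+1} (an instance of the distribution law) is not derivable in equational logic from the structural congruence axioms together with only the first k distribution axioms D₁,…,D_k. In particular, one may take any n > k with n+1 prime. -/

import Mathlib

/-- CCS visible actions: a name `a` or a coname `ā`. -/
inductive Act where
  | inp : ℕ → Act
  | out : ℕ → Act
deriving DecidableEq

/-- The coaction. -/
def Act.co : Act → Act
  | .inp a => .out a
  | .out a => .inp a

/-- MicroCCS processes: nil, prefix, parallel composition. -/
inductive Proc where
  | nil : Proc
  | pre : Act → Proc → Proc
  | par : Proc → Proc → Proc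
deriving DecidableEq

/-- Transition labels: a visible action or τ. -/
inductive Lab where
  | act : Act → Lab
  | tau : Lab
deriving DecidableEq

/-- The standard CCS labelled transition system on microCCS. -/
inductive Step : Proc → Lab → Proc → Prop where
  | pre (η : Act) (P : Proc) : Step (.pre η P) (.act η) P
  | syn {P P' Q Q' : Proc} {η : Act} :
      Step P (.act η) P' → Step Q (.act η.co) Q' →
      Step (.par P Q) .tau (.par P' Q')
  | parL {P P' : Proc} {μ : Lab} (Q : Proc) :
      Step P μ P' → Step (.par P Q) μ (.par P' Q)
  | parR {Q Q' : Proc} {μ : Lab} (P : Proc) :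
      Step Q μ Q' → Step (.par P Q) μ (.par P Q')

/-- A (symmetric) bisimulation. -/
def IsBisim (R : Proc → Proc → Prop) : Prop :=
  (∀ P Q, R P Q → R Q P) ∧
  ∀ P Q μ P', R P Q → Step P μ P' → ∃ Q', Step Q μ Q' ∧ R P' Q'

/-- Strong bisimilarity: the union of all bisimulations. -/
def Bisim (P Q : Proc) : Prop := ∃ R, IsBisim R ∧ R P Q

/-- The size of a process: its number of prefixes. -/
def Proc.size : Proc → ℕ
  | .nil => 0
  | .pre _ P => 1 + P.size
  | .par P Q => P.size + Q.size

/-- Structural congruence: abelian monoid laws for parallel composition. -/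
inductive SC : Proc → Proc → Prop where
  | refl (P) : SC P P
  | symm : SC P Q → SC Q P
  | trans : SC P Q → SC Q R → SC P R
  | comm (P Q) : SC (.par P Q) (.par Q P)
  | assoc (P Q R) : SC (.par P (.par Q R)) (.par (.par P Q) R)
  | unit (P) : SC (.par P .nil) P
  | pre (η) : SC P Q → SC (.pre η P) (.pre η Q)
  | par : SC P P' → SC Q Q' → SC (.par P Q) (.par P' Q')

/-- `pow P k` is the k-fold parallel composition of `P`. -/
def pow (P : Proc) : ℕ → Proc
  | 0 => .nil
  | n+1 => .par P (pow P n)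

/-- One step of rewriting with the distribution law
    `η.(P ‖ (η.P)^k) ⇝ (η.P)^{k+1}` (k ≥ 1), modulo structural
    congruence, in any context. -/
inductive RW : Proc → Proc → Prop where
  | head {η : Act} {P : Proc} {k : ℕ} (hk : 1 ≤ k) :
      RW (.pre η (.par P (pow (.pre η P) k))) (pow (.pre η P) (k+1))
  | pre (η) : RW P P' → RW (.pre η P) (.pre η P')
  | parL (Q) : RW P P' → RW (.par P Q) (.par P' Q)
  | parR (P) : RW Q Q' → RW (.par P Q) (.par P Q')
  | congr : SC P P₁ → RW P₁ P₂ → SC P₂ P' → RW P P'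

/-- Reflexive-transitive closure of the distribution rewriting. -/
def Rws : Proc → Proc → Prop := Relation.ReflTransGen RW

/-- Normal forms for the distribution rewriting. -/
def NF (P : Proc) : Prop := ¬ ∃ P', RW P P'

/-- Prime processes. -/
def IsPrime (P : Proc) : Prop :=
  ¬ Bisim P .nil ∧ ∀ Q R, Bisim P (.par Q R) → Bisim Q .nil ∨ Bisim R .nil

/-- Equational derivability on processes from structural congruence axioms
    together with only the first `k` distribution axiom schemas
    `Dᵢ : η.(P ‖ (η.P)^i) = (η.P)^{i+1}`, `1 ≤ i ≤ k`. -/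
inductive DkEq (k : ℕ) : Proc → Proc → Prop where
  | refl (P) : DkEq k P P
  | symm : DkEq k P Q → DkEq k Q P
  | trans : DkEq k P Q → DkEq k Q R → DkEq k P R
  | comm (P Q) : DkEq k (.par P Q) (.par Q P)
  | assoc (P Q R) : DkEq k (.par P (.par Q R)) (.par (.par P Q) R)
  | unit (P) : DkEq k (.par P .nil) P
  | pre (η) : DkEq k P Q → DkEq k (.pre η P) (.pre η Q)
  | par : DkEq k P P' → DkEq k Q Q' → DkEq k (.par P Q) (.par P' Q')
  | dist {η : Act} (P : Proc) {i : ℕ} (h1 : 1 ≤ i) (h2 : i ≤ k) :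
      DkEq k (.pre η (.par P (pow (.pre η P) i))) (pow (.pre η P) (i+1))

/-! ### Auxiliary development -/

/-- The numeric model: `f p x = 0` if `p ∣ x+1`, else `x+1`. -/
def fmod (p x : ℕ) : ℕ := if p ∣ x + 1 then 0 else x + 1

/-- Interpretation of processes in the model. -/
def phi (p : ℕ) : Proc → ℕ
  | .nil => 0
  | .pre _ P => fmod p (phi p P)
  | .par P Q => phi p P + phi p Q

lemma phi_pow (p : ℕ) (P : Proc) (m : ℕ) : phi p (pow P m) = m * phi p P := by
  induction m with
  | zero => simp [pow, phi]
  | succ m ih => simp [pow, phi, ih]; ring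

lemma fmod_dist {p : ℕ} (hp : p.Prime) {i : ℕ} (hi1 : 1 ≤ i) (hip : i + 1 < p) (x : ℕ) :
    fmod p (x + i * fmod p x) = (i + 1) * fmod p x := by
  by_cases h : p ∣ x + 1
  · simp [fmod, h]
  · have hfx : fmod p x = x + 1 := by simp [fmod, h]
    rw [hfx]
    have key : x + i * (x + 1) + 1 = (i + 1) * (x + 1) := by ring
    have hnd : ¬ p ∣ (i + 1) * (x + 1) := by
      intro hd
      rcases (Nat.Prime.dvd_mul hp).1 hd with h1 | h2
      · have := Nat.le_of_dvd (by omega) h1; omega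
      · exact h h2
    simp [fmod, key, hnd]

lemma phi_DkEq {k p : ℕ} (hp : p.Prime) (hkp : k + 1 < p) {P Q : Proc}
    (h : DkEq k P Q) : phi p P = phi p Q := by
  induction h with
  | refl P => rfl
  | symm _ ih => exact ih.symm
  | trans _ _ ih1 ih2 => exact ih1.trans ih2
  | comm P Q => simp [phi]; ring
  | assoc P Q R => simp [phi]; ring
  | unit P => simp [phi]
  | pre η _ ih => simp [phi, ih]
  | par _ _ ih1 ih2 => simp [phi, ih1, ih2]
  | dist P h1 h2 =>
      show fmod p (phi p _ + phi p (pow _ _)) = phi p (pow _ _)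
      rw [phi_pow, phi_pow]
      exact fmod_dist hp h1 (by omega) _

/-- Processes built from `nil`, `a.0` and `a.aⁿ` by parallel composition. -/
inductive Good (a : ℕ) : Proc → Prop where
  | nil : Good a .nil
  | atom : Good a (.pre (.inp a) .nil)
  | top (n : ℕ) : Good a (.pre (.inp a) (pow (.pre (.inp a) .nil) n))
  | par {P Q : Proc} : Good a P → Good a Q → Good a (.par P Q)

lemma good_pow (a n : ℕ) : Good a (pow (.pre (.inp a) .nil) n) := by
  induction n with
  | zero => exact Good.nil
  | succ n ih => exact Good.par Good.atom ih

lemma size_pow (P : Proc) (m : ℕ) : (pow P m).size = m * P.size := by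
  induction m with
  | zero => simp [pow, Proc.size]
  | succ m ih => simp [pow, Proc.size, ih]; ring

lemma good_step {a : ℕ} {P P' : Proc} {μ : Lab} (hs : Step P μ P') (hg : Good a P) :
    μ = .act (.inp a) ∧ Good a P' ∧ P'.size + 1 = P.size := by
  induction hs with
  | pre η P =>
      cases hg with
      | atom => exact ⟨rfl, Good.nil, by simp [Proc.size]⟩
      | top n =>
          refine ⟨rfl, good_pow a n, ?_⟩
          simp [Proc.size]; omega
  | syn h1 h2 ih1 ih2 =>
      cases hg with
      | par hP hQ =>
          have e1 := (ih1 hP).1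
          have e2 := (ih2 hQ).1
          cases e1
          simp [Act.co] at e2
  | parL Q h ih =>
      cases hg with
      | par hP hQ =>
          obtain ⟨e, g, s⟩ := ih hP
          exact ⟨e, Good.par g hQ, by simp [Proc.size]; omega⟩
  | parR P h ih =>
      cases hg with
      | par hP hQ =>
          obtain ⟨e, g, s⟩ := ih hQ
          exact ⟨e, Good.par hP g, by simp [Proc.size]; omega⟩

lemma good_progress {a : ℕ} {P : Proc} (hg : Good a P) (hs : 1 ≤ P.size) :
    ∃ P', Step P (.act (.inp a)) P' := by
  induction hg with
  | nil => simp [Proc.size] at hs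
  | atom => exact ⟨.nil, Step.pre _ _⟩
  | top n => exact ⟨_, Step.pre _ _⟩
  | par hP hQ ihP ihQ =>
      rename_i P Q
      simp [Proc.size] at hs
      by_cases h : 1 ≤ P.size
      · obtain ⟨P', hP'⟩ := ihP h
        exact ⟨.par P' Q, Step.parL Q hP'⟩
      · obtain ⟨Q', hQ'⟩ := ihQ (by omega)
        exact ⟨.par P Q', Step.parR P hQ'⟩

lemma good_bisim {a : ℕ} {P Q : Proc} (hP : Good a P) (hQ : Good a Q)
    (hs : P.size = Q.size) : Bisim P Q := by
  refine ⟨fun P Q => Good a P ∧ Good a Q ∧ P.size = Q.size, ⟨?_, ?_⟩, hP, hQ, hs⟩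
  · rintro P Q ⟨h1, h2, h3⟩; exact ⟨h2, h1, h3.symm⟩
  · rintro P Q μ P' ⟨h1, h2, h3⟩ hstep
    obtain ⟨e, g, s⟩ := good_step hstep h1
    obtain ⟨Q', hQ'⟩ := good_progress h2 (by omega)
    obtain ⟨e', g', s'⟩ := good_step hQ' h2
    subst e
    exact ⟨Q', hQ', g, g', by omega⟩

lemma not_dkeq {k a n : ℕ} (hkn : k < n) (hpr : Nat.Prime (n + 1)) :
    ¬ DkEq k (.pre (.inp a) (pow (.pre (.inp a) .nil) n))
             (pow (.pre (.inp a) .nil) (n+1)) := by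
  intro h
  have hphi := phi_DkEq (p := n + 1) hpr (by omega) h
  have h1 : phi (n+1) (Proc.pre (.inp a) .nil) = 1 := by
    have h2 := hpr.one_lt
    have : ¬ (n + 1) ∣ 1 := by rw [Nat.dvd_one]; omega
    simp [phi, fmod, this]
  rw [show phi (n+1) (Proc.pre (.inp a) (pow (.pre (.inp a) .nil) n))
        = fmod (n+1) (phi (n+1) (pow (.pre (.inp a) .nil) n)) from rfl,
      phi_pow, phi_pow, h1] at hphi
  simp [fmod] at hphi

/-- for every `k ≥ 1` there is `n` such that the (sound)
    instance `a.aⁿ = a^{n+1}` of the distribution law is not derivable from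
    `𝒟_k`; in particular one may take any `n > k` with `n+1` prime. -/
theorem dist_instances_independent (k : ℕ) (hk : 1 ≤ k) (a : ℕ) :
    (∃ n : ℕ,
      Bisim (.pre (.inp a) (pow (.pre (.inp a) .nil) n))
            (pow (.pre (.inp a) .nil) (n+1)) ∧
      ¬ DkEq k (.pre (.inp a) (pow (.pre (.inp a) .nil) n))
               (pow (.pre (.inp a) .nil) (n+1))) ∧
    (∀ n : ℕ, k < n → Nat.Prime (n+1) →
      ¬ DkEq k (.pre (.inp a) (pow (.pre (.inp a) .nil) n))
               (pow (.pre (.inp a) .nil) (n+1))) := by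
  constructor
  · obtain ⟨p, hpk, hpr⟩ := Nat.exists_infinite_primes (k + 2)
    refine ⟨p - 1, ?_, ?_⟩
    · apply good_bisim (Good.top _) (good_pow a _)
      simp [Proc.size, size_pow]; omega
    · have h1 : p - 1 + 1 = p := by omega
      have hpr' : Nat.Prime (p - 1 + 1) := by rw [h1]; exact hpr
      exact not_dkeq (by omega) hpr'
  · intro n hn hpr
    exact not_dkeq hn hpr
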